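/- arXiv:2209.13938 — 2 statements merged into one kernel-verified Lean document; each statement's English description precedes it below -/
import Mathlib

section
/- Let G be a (2 × n)-game with payoff matrices X¹, X² : Fin 2 → Fin n → ℝ. If X¹ 1 k − X¹ 2 k > 0 for all k ∈ Fin n, then every point p of the correlated equilibrium polytope P_G satisfies p 2 k = 0 for all k; symmetrically, if X¹ 1 k − X¹ 2 k < 0 for all k, then every p ∈ P_G satisfies p 1 k = 0 for all k. In either case P_G does not have maximal dimension, i.e. the dimension of the direction of its affine span is strictly less than 2n − 1. -/
/-- The correlated equilibrium polytope of a `(2 × n)`-game. -/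
def CorrelatedEqPolytope {n : ℕ} (X1 X2 : Fin 2 → Fin n → ℝ) :
    Set (Fin 2 → Fin n → ℝ) :=
  {p | (∀ j k, 0 ≤ p j k) ∧ (∑ j, ∑ k, p j k = 1) ∧
    (∀ k l : Fin 2, 0 ≤ ∑ j, (X1 k j - X1 l j) * p k j) ∧
    (∀ k l : Fin n, 0 ≤ ∑ i, (X2 i k - X2 i l) * p i k)}

/-- The summation linear functional. -/
noncomputable def sigmaLin (n : ℕ) : (Fin 2 → Fin n → ℝ) →ₗ[ℝ] ℝ where
  toFun p := ∑ j, ∑ k, p j k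
  map_add' p q := by simp [Finset.sum_add_distrib]
  map_smul' c p := by simp only [Pi.smul_apply, smul_eq_mul, RingHom.id_apply, Finset.mul_sum]

/-- Evaluation linear functional. -/
noncomputable def evalLin (n : ℕ) (j₀ : Fin 2) (k₀ : Fin n) :
    (Fin 2 → Fin n → ℝ) →ₗ[ℝ] ℝ where
  toFun p := p j₀ k₀
  map_add' p q := rfl
  map_smul' c p := rfl

lemma dim_lemma {n : ℕ} (hn : 1 ≤ n) (S : Set (Fin 2 → Fin n → ℝ))
    (hsum : ∀ p ∈ S, ∑ j, ∑ k, p j k = 1) (j₀ : Fin 2) (k₀ : Fin n)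
    (hz : ∀ p ∈ S, p j₀ k₀ = 0) :
    Module.finrank ℝ (affineSpan ℝ S).direction < 2 * n - 1 := by
  set φ := evalLin n j₀ k₀
  set σ := sigmaLin n
  set ψ := φ.prod σ with hψ
  have hsurj : Function.Surjective ψ := by
    rintro ⟨a, b⟩
    refine ⟨fun j k => if k = k₀ then (if j = j₀ then a else b - a) else 0, ?_⟩
    have hφ : φ (fun j k => if k = k₀ then (if j = j₀ then a else b - a) else 0) = a := by
      simp [φ, evalLin]
    have hσ : σ (fun j k => if k = k₀ then (if j = j₀ then a else b - a) else 0) = b := by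
      simp only [σ, sigmaLin, LinearMap.coe_mk, AddHom.coe_mk]
      rw [Finset.sum_congr rfl (fun j _ => Finset.sum_ite_eq' Finset.univ k₀ _)]
      simp only [Finset.mem_univ, if_true]
      fin_cases j₀ <;> simp [Fin.sum_univ_two] <;> ring
    simp [ψ, LinearMap.prod_apply, hφ, hσ, Prod.ext_iff]
  have hle : (affineSpan ℝ S).direction ≤ LinearMap.ker ψ := by
    rw [direction_affineSpan]
    rw [vectorSpan_def]
    rw [Submodule.span_le]
    rintro v hv
    rw [Set.mem_vsub] at hv
    obtain ⟨p, hp, q, hq, rfl⟩ := hv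
    have h1 : φ (p -ᵥ q) = 0 := by
      simp [φ, evalLin, hz p hp, hz q hq]
    have h2 : σ (p -ᵥ q) = 0 := by
      have : σ p - σ q = 0 := by
        simp only [σ, sigmaLin, LinearMap.coe_mk, AddHom.coe_mk]
        rw [hsum p hp, hsum q hq]; ring
      rw [← map_sub] at this
      simpa using this
    simp only [SetLike.mem_coe, LinearMap.mem_ker, ψ, LinearMap.prod_apply,
      Function.prod, Prod.mk_eq_zero]
    exact ⟨h1, h2⟩
  have hmono := Submodule.finrank_mono hle
  have hrn := LinearMap.finrank_range_add_finrank_ker ψ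
  have hrange : LinearMap.range ψ = ⊤ := LinearMap.range_eq_top.mpr hsurj
  rw [hrange] at hrn
  have htop : Module.finrank ℝ (⊤ : Submodule ℝ (ℝ × ℝ)) = 2 := by
    rw [finrank_top]
    simp [Module.finrank_prod]
  rw [htop] at hrn
  have hV : Module.finrank ℝ (Fin 2 → Fin n → ℝ) = 2 * n := by
    rw [Module.finrank_pi_fintype ℝ]
    simp [Module.finrank_fintype_fun_eq_card]
  rw [hV] at hrn
  omega

lemma vanish_lemma {n : ℕ} (X1 X2 : Fin 2 → Fin n → ℝ)
    (j₀ : Fin 2) (h : ∀ k, X1 j₀ k - X1 (1 - j₀) k < 0)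
    (p : Fin 2 → Fin n → ℝ) (hp : p ∈ CorrelatedEqPolytope X1 X2) :
    ∀ k, p j₀ k = 0 := by
  obtain ⟨hpos, hsum, h3, h4⟩ := hp
  intro k
  have key := h3 j₀ (1 - j₀)
  have hnonpos : ∀ j ∈ Finset.univ, (X1 j₀ j - X1 (1 - j₀) j) * p j₀ j ≤ 0 :=
    fun j _ => mul_nonpos_of_nonpos_of_nonneg (le_of_lt (h j)) (hpos j₀ j)
  have hzero : ∑ j, (X1 j₀ j - X1 (1 - j₀) j) * p j₀ j = 0 :=
    le_antisymm (Finset.sum_nonpos hnonpos) key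
  have heach := (Finset.sum_eq_zero_iff_of_nonpos hnonpos).mp hzero k (Finset.mem_univ k)
  rcases mul_eq_zero.mp heach with h' | h'
  · exact absurd h' (ne_of_lt (h k))
  · exact h'

/-- If player 1's payoff differences `X¹ 1 k − X¹ 2 k` all have the same (nonzero) sign,
then a whole row of coordinates vanishes on the correlated equilibrium polytope, and the
polytope does not have maximal dimension `2n − 1`. -/
theorem row_sign_forces_vanishing_row_and_not_maximal_dim
    {n : ℕ} (hn : 1 ≤ n) (X1 X2 : Fin 2 → Fin n → ℝ) :
    ((∀ k, 0 < X1 0 k - X1 1 k) →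
      ∀ p ∈ CorrelatedEqPolytope X1 X2, ∀ k, p 1 k = 0) ∧
    ((∀ k, X1 0 k - X1 1 k < 0) →
      ∀ p ∈ CorrelatedEqPolytope X1 X2, ∀ k, p 0 k = 0) ∧
    (((∀ k, 0 < X1 0 k - X1 1 k) ∨ (∀ k, X1 0 k - X1 1 k < 0)) →
      Module.finrank ℝ (affineSpan ℝ (CorrelatedEqPolytope X1 X2)).direction
        < 2 * n - 1) := by
  have hA : (∀ k, 0 < X1 0 k - X1 1 k) →
      ∀ p ∈ CorrelatedEqPolytope X1 X2, ∀ k, p 1 k = 0 := by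
    intro h p hp
    exact vanish_lemma X1 X2 1 (by intro k; have := h k; norm_num; linarith) p hp
  have hB : (∀ k, X1 0 k - X1 1 k < 0) →
      ∀ p ∈ CorrelatedEqPolytope X1 X2, ∀ k, p 0 k = 0 := by
    intro h p hp
    exact vanish_lemma X1 X2 0 (by intro k; have := h k; norm_num; linarith) p hp
  refine ⟨hA, hB, ?_⟩
  have k₀ : Fin n := ⟨0, hn⟩
  rintro (h | h)
  · exact dim_lemma hn _ (fun p hp => hp.2.1) 1 k₀ (fun p hp => hA h p hp k₀)
  · exact dim_lemma hn _ (fun p hp => hp.2.1) 0 k₀ (fun p hp => hB h p hp k₀)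
end

section
/- Let G be a (2 × n)-game with payoff matrices X¹, X² : Fin 2 → Fin n → ℝ, and fix a strategy m ∈ Fin n of player 2. If X² i k − X² i m > 0 for both i ∈ Fin 2 and all k ∈ Fin n with k ≠ m, then every point p of the correlated equilibrium polytope P_G satisfies p 1 m = p 2 m = 0; symmetrically, if X² i k − X² i m < 0 for both i and all k ≠ m, then every p ∈ P_G satisfies p 1 k = p 2 k = 0 for all k ≠ m. In either case P_G does not have maximal dimension, i.e. the dimension of the direction of its affine span is strictly less than 2n − 1. -/
/-- Evaluation at one coordinate paired with the total sum, as a linear map. -/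
noncomputable def Lmap {n : ℕ} (c : Fin n) : (Fin 2 → Fin n → ℝ) →ₗ[ℝ] ℝ × ℝ where
  toFun p := (p 0 c, ∑ j, ∑ k, p j k)
  map_add' p q := by simp [Finset.sum_add_distrib]
  map_smul' r p := by
    simp [Finset.mul_sum, Prod.ext_iff]
    rw [mul_add, Finset.mul_sum, Finset.mul_sum]

lemma Lmap_surj {n : ℕ} (c : Fin n) : Function.Surjective (Lmap (n := n) c) := by
  rintro ⟨a, b⟩
  refine ⟨fun j k => if j = 0 then (if k = c then a else 0) else (if k = c then b - a else 0), ?_⟩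
  simp [Lmap, Fin.sum_univ_two, Finset.sum_ite_eq']

lemma aux_dim {n : ℕ} (hn : 2 ≤ n) (S : Set (Fin 2 → Fin n → ℝ)) (c : Fin n)
    (h0 : ∀ p ∈ S, p 0 c = 0) (h1 : ∀ p ∈ S, ∑ j, ∑ k, p j k = 1) :
    Module.finrank ℝ (affineSpan ℝ S).direction < 2 * n - 1 := by
  have hker : (affineSpan ℝ S).direction ≤ LinearMap.ker (Lmap c) := by
    rw [direction_affineSpan, vectorSpan_def]
    refine Submodule.span_le.2 ?_
    rintro v ⟨s, hs, t, ht, rfl⟩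
    have h1s := h1 s hs
    have h1t := h1 t ht
    rw [Fin.sum_univ_two] at h1s h1t
    have hs' : Lmap c s = (0, 1) := by simp [Lmap, h0 s hs, h1s]
    have ht' : Lmap c t = (0, 1) := by simp [Lmap, h0 t ht, h1t]
    simp [SetLike.mem_coe, LinearMap.mem_ker, vsub_eq_sub, map_sub, hs', ht']
  have hrank : Module.finrank ℝ (LinearMap.range (Lmap (n := n) c))
      + Module.finrank ℝ (LinearMap.ker (Lmap (n := n) c))
      = Module.finrank ℝ (Fin 2 → Fin n → ℝ) :=
    LinearMap.finrank_range_add_finrank_ker _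
  have hr : Module.finrank ℝ (LinearMap.range (Lmap (n := n) c)) = 2 := by
    rw [LinearMap.range_eq_top.2 (Lmap_surj c), finrank_top]
    simp
  have hdom : Module.finrank ℝ (Fin 2 → Fin n → ℝ) = 2 * n := by
    simp [Module.finrank_pi_fintype]
  have := Submodule.finrank_mono hker
  omega

/-- If player 2's payoff differences against a fixed strategy `m` all have the same
(nonzero) sign, then certain columns of coordinates vanish on the correlated equilibrium
polytope, and the polytope does not have maximal dimension `2n − 1`. -/
theorem column_sign_forces_vanishing_and_not_maximal_dim
    {n : ℕ} (hn : 2 ≤ n) (X1 X2 : Fin 2 → Fin n → ℝ) (m : Fin n) :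
    ((∀ (i : Fin 2) (k : Fin n), k ≠ m → 0 < X2 i k - X2 i m) →
      ∀ p ∈ CorrelatedEqPolytope X1 X2, p 0 m = 0 ∧ p 1 m = 0) ∧
    ((∀ (i : Fin 2) (k : Fin n), k ≠ m → X2 i k - X2 i m < 0) →
      ∀ p ∈ CorrelatedEqPolytope X1 X2, ∀ k : Fin n, k ≠ m → p 0 k = 0 ∧ p 1 k = 0) ∧
    (((∀ (i : Fin 2) (k : Fin n), k ≠ m → 0 < X2 i k - X2 i m) ∨
        (∀ (i : Fin 2) (k : Fin n), k ≠ m → X2 i k - X2 i m < 0)) →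
      Module.finrank ℝ (affineSpan ℝ (CorrelatedEqPolytope X1 X2)).direction
        < 2 * n - 1) := by
  obtain ⟨k', hk'⟩ : ∃ k' : Fin n, k' ≠ m := by
    have : Nontrivial (Fin n) := Fin.nontrivial_iff_two_le.mpr hn
    exact exists_ne m
  have key : ∀ (a b p0 p1 : ℝ), a < 0 → b < 0 → 0 ≤ p0 → 0 ≤ p1 →
      0 ≤ a * p0 + b * p1 → p0 = 0 ∧ p1 = 0 := fun a b p0 p1 ha hb h0 h1 h => by
    constructor <;> nlinarith [mul_nonneg h0 h1]
  have case1 : (∀ (i : Fin 2) (k : Fin n), k ≠ m → 0 < X2 i k - X2 i m) →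
      ∀ p ∈ CorrelatedEqPolytope X1 X2, p 0 m = 0 ∧ p 1 m = 0 := by
    intro hpos p hp
    obtain ⟨hnn, hsum, -, h4⟩ := hp
    have h := h4 m k'
    rw [Fin.sum_univ_two] at h
    exact key _ _ _ _ (by linarith [hpos 0 k' hk']) (by linarith [hpos 1 k' hk'])
      (hnn 0 m) (hnn 1 m) h
  have case2 : (∀ (i : Fin 2) (k : Fin n), k ≠ m → X2 i k - X2 i m < 0) →
      ∀ p ∈ CorrelatedEqPolytope X1 X2, ∀ k : Fin n, k ≠ m → p 0 k = 0 ∧ p 1 k = 0 := by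
    intro hneg p hp k hk
    obtain ⟨hnn, hsum, -, h4⟩ := hp
    have h := h4 k m
    rw [Fin.sum_univ_two] at h
    exact key _ _ _ _ (hneg 0 k hk) (hneg 1 k hk) (hnn 0 k) (hnn 1 k) h
  refine ⟨case1, case2, ?_⟩
  rintro (h | h)
  · exact aux_dim hn _ m (fun p hp => (case1 h p hp).1) (fun p hp => hp.2.1)
  · exact aux_dim hn _ k' (fun p hp => (case2 h p hp k' hk').1) (fun p hp => hp.2.1)
end
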